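/- arXiv:1901.07894 — 3 statements merged into one kernel-verified Lean document; each statement's English description precedes it below -/
import Mathlib

section
/- If an n-dimensional para-Sasakian manifold with quarter-symmetric metric connection is Ricci-pseudosymmetric, i.e. S̃(R̃(X,Y)Z, W) + S̃(Z, R̃(X,Y)W) = L·[S̃((X∧Y)Z, W) + S̃(Z, (X∧Y)W)] for all X,Y,Z,W where (X∧Y)Z = g(Y,Z)X − g(X,Z)Y, then for all X, Z: (L + 2)·[S̃(X,Z) + 2(n−1)g(X,Z)] = 0. Hence either L = −2 or S̃ = −2(n−1)g. -/
open scoped InnerProductSpace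

/-- if an n-dimensional para-Sasakian structure with
quarter-symmetric metric connection is Ricci-pseudosymmetric, then
(L + 2)·[S̃(X,Z) + 2(n−1)g(X,Z)] = 0 for all X, Z; hence either L = −2 or
S̃ = −2(n−1)g. -/
theorem stmt_10 {V : Type*} [NormedAddCommGroup V] [InnerProductSpace ℝ V]
    [FiniteDimensional ℝ V] (n : ℕ) (hn : Module.finrank ℝ V = n)
    (ξ : V) (hξ : ⟪ξ, ξ⟫_ℝ = 1)
    (St : V →ₗ[ℝ] V →ₗ[ℝ] ℝ)
    (hStsymm : ∀ X Y, St X Y = St Y X)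
    (hStξ : ∀ X, St X ξ = -2 * ((n : ℝ) - 1) * ⟪X, ξ⟫_ℝ)
    (Rt : V →ₗ[ℝ] V →ₗ[ℝ] V →ₗ[ℝ] V)
    (hRtξ : ∀ X Y, Rt X Y ξ = (2 : ℝ) • (⟪X, ξ⟫_ℝ • Y - ⟪Y, ξ⟫_ℝ • X))
    (hRtξ' : ∀ X Y, Rt ξ X Y = (2 : ℝ) • (⟪Y, ξ⟫_ℝ • X - ⟪X, Y⟫_ℝ • ξ))
    (L : ℝ)
    (hps : ∀ X Y Z W,
      St (Rt X Y Z) W + St Z (Rt X Y W)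
        = L * (St (⟪Y, Z⟫_ℝ • X - ⟪X, Z⟫_ℝ • Y) W
            + St Z (⟪Y, W⟫_ℝ • X - ⟪X, W⟫_ℝ • Y))) :
    (∀ X Z, (L + 2) * (St X Z + 2 * ((n : ℝ) - 1) * ⟪X, Z⟫_ℝ) = 0) ∧
    (L = -2 ∨ ∀ X Z, St X Z = -2 * ((n : ℝ) - 1) * ⟪X, Z⟫_ℝ) := by
  have key : ∀ X Z, (L + 2) * (St X Z + 2 * ((n : ℝ) - 1) * ⟪X, Z⟫_ℝ) = 0 := by
    intro X Z
    have h := hps ξ X Z ξ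
    rw [hRtξ' X Z, hRtξ' X ξ] at h
    simp only [map_smul, map_sub, LinearMap.smul_apply, LinearMap.sub_apply,
      smul_eq_mul, hStξ, hξ, hStsymm Z X, hStsymm ξ X, hStsymm Z ξ,
      real_inner_comm ξ X, real_inner_comm ξ Z] at h
    ring_nf at h ⊢
    nlinarith [h]
  refine ⟨key, ?_⟩
  by_cases hL : L = -2
  · exact Or.inl hL
  · refine Or.inr fun X Z => ?_
    have h := key X Z
    have : L + 2 ≠ 0 := fun h' => hL (by linarith)
    have h2 : St X Z + 2 * ((n : ℝ) - 1) * ⟪X, Z⟫_ℝ = 0 := by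
      rcases mul_eq_zero.mp h with h' | h'
      · exact absurd h' this
      · exact h'
    linarith
end

section
/- If a pseudosymmetric condition holds for the quarter-symmetric curvature, namely (R̃(ξ,Y)·R̃)(U,V,W) = L·((ξ∧Y)·R̃)(U,V,W) for all vectors, and L ≠ −2, then contracting yields S̃(Y,U) = −2(n−1)g(Y,U) for all Y, U; i.e., the manifold is Einstein with respect to the quarter-symmetric metric connection. -/
open scoped InnerProductSpace

/-- if the pseudosymmetry condition
(R̃(ξ,Y)·R̃)(U,V,W) = L·((ξ∧Y)·R̃)(U,V,W) holds with L ≠ −2, then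
S̃(Y,U) = −2(n−1)g(Y,U), where S̃ is the Ricci trace of the quarter-symmetric
curvature R̃ over an orthonormal basis. -/
theorem stmt_11 {V : Type*} [NormedAddCommGroup V] [InnerProductSpace ℝ V] (n : ℕ)
    (b : Module.Basis (Fin n) ℝ V) (hb : Orthonormal ℝ b)
    (ξ : V) (hξ : ⟪ξ, ξ⟫_ℝ = 1)
    (φ : V →ₗ[ℝ] V)
    (hsa : ∀ X Y, ⟪φ X, Y⟫_ℝ = ⟪X, φ Y⟫_ℝ)
    (hφξ : φ ξ = 0)
    (hsq : ∀ X, φ (φ X) = X - ⟪X, ξ⟫_ℝ • ξ)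
    (hcomp : ∀ X Y, ⟪φ X, φ Y⟫_ℝ = ⟪X, Y⟫_ℝ - ⟪X, ξ⟫_ℝ * ⟪Y, ξ⟫_ℝ)
    (R : V →ₗ[ℝ] V →ₗ[ℝ] V →ₗ[ℝ] V)
    (hRanti : ∀ X Y Z, R X Y Z = - R Y X Z)
    (hRpair : ∀ X Y Z W, ⟪R X Y Z, W⟫_ℝ = - ⟪R X Y W, Z⟫_ℝ)
    (hRξ : ∀ X Y, R X Y ξ = ⟪X, ξ⟫_ℝ • Y - ⟪Y, ξ⟫_ℝ • X)
    (hRξ' : ∀ X Y, R ξ X Y = ⟪Y, ξ⟫_ℝ • X - ⟪X, Y⟫_ℝ • ξ)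
    (hRη : ∀ X Y Z, ⟪R X Y Z, ξ⟫_ℝ = ⟪X, Z⟫_ℝ * ⟪Y, ξ⟫_ℝ - ⟪Y, Z⟫_ℝ * ⟪X, ξ⟫_ℝ)
    (Rt : V → V → V → V)
    (hRt : ∀ X Y Z, Rt X Y Z = R X Y Z
      + (3 * ⟪φ X, Z⟫_ℝ) • φ Y - (3 * ⟪φ Y, Z⟫_ℝ) • φ X
      + ⟪Z, ξ⟫_ℝ • (⟪X, ξ⟫_ℝ • Y - ⟪Y, ξ⟫_ℝ • X)
      - (⟪Y, Z⟫_ℝ * ⟪X, ξ⟫_ℝ - ⟪X, Z⟫_ℝ * ⟪Y, ξ⟫_ℝ) • ξ)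
    (L : ℝ) (hL : L ≠ -2)
    (hps : ∀ Y U W₁ W₂,
      Rt ξ Y (Rt U W₁ W₂) - Rt (Rt ξ Y U) W₁ W₂
        - Rt U (Rt ξ Y W₁) W₂ - Rt U W₁ (Rt ξ Y W₂)
      = L • ((⟪Y, Rt U W₁ W₂⟫_ℝ • ξ - ⟪ξ, Rt U W₁ W₂⟫_ℝ • Y)
          - Rt (⟪Y, U⟫_ℝ • ξ - ⟪ξ, U⟫_ℝ • Y) W₁ W₂
          - Rt U (⟪Y, W₁⟫_ℝ • ξ - ⟪ξ, W₁⟫_ℝ • Y) W₂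
          - Rt U W₁ (⟪Y, W₂⟫_ℝ • ξ - ⟪ξ, W₂⟫_ℝ • Y))) :
    ∀ Y U, (∑ i, ⟪Rt (b i) Y U, b i⟫_ℝ) = -2 * ((n : ℝ) - 1) * ⟪Y, U⟫_ℝ := by
  have hφξL : ∀ Z : V, ⟪φ ξ, Z⟫_ℝ = 0 := fun Z => by rw [hφξ]; simp
  have hφξR : ∀ Z : V, ⟪φ Z, ξ⟫_ℝ = 0 := fun Z => by rw [hsa, hφξ]; simp
  -- Lemma A : Rt ξ Y Z = (-2) • (⟪Y,Z⟫ ξ - ⟪ξ,Z⟫ Y)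
  have hA : ∀ Y Z : V, Rt ξ Y Z = (-2 : ℝ) • (⟪Y, Z⟫_ℝ • ξ - ⟪ξ, Z⟫_ℝ • Y) := by
    intro Y Z
    rw [hRt, hRξ', hφξ]
    simp only [inner_zero_left, smul_zero, mul_zero, zero_smul, add_zero, sub_zero, hξ]
    rw [real_inner_comm Z ξ]
    match_scalars <;> ring
  -- Lemma B : ⟪Rt X Y Z, ξ⟫ = 2(⟪X,Z⟫⟪Y,ξ⟫ - ⟪Y,Z⟫⟪X,ξ⟫)
  have hB : ∀ X Y Z : V, ⟪Rt X Y Z, ξ⟫_ℝ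
      = 2 * (⟪X, Z⟫_ℝ * ⟪Y, ξ⟫_ℝ - ⟪Y, Z⟫_ℝ * ⟪X, ξ⟫_ℝ) := by
    intro X Y Z
    rw [hRt]
    simp only [inner_add_left, inner_sub_left, inner_smul_left, real_inner_smul_left,
      hRη, hφξR, hξ, RCLike.inner_apply, conj_trivial]
    ring
  -- smul linearity of Rt in each slot
  have hS1 : ∀ (c : ℝ) (X Y Z : V), Rt (c • X) Y Z = c • Rt X Y Z := by
    intro c X Y Z
    rw [hRt, hRt]
    simp only [map_smul, LinearMap.smul_apply, inner_smul_left, RCLike.inner_apply,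
      conj_trivial]
    match_scalars <;> ring
  have hS2 : ∀ (c : ℝ) (X Y Z : V), Rt X (c • Y) Z = c • Rt X Y Z := by
    intro c X Y Z
    rw [hRt, hRt]
    simp only [map_smul, LinearMap.smul_apply, inner_smul_left, RCLike.inner_apply,
      conj_trivial]
    match_scalars <;> ring
  have hS3 : ∀ (c : ℝ) (X Y Z : V), Rt X Y (c • Z) = c • Rt X Y Z := by
    intro c X Y Z
    rw [hRt, hRt]
    simp only [map_smul, LinearMap.smul_apply, inner_smul_left, inner_smul_right,
      RCLike.inner_apply, conj_trivial]
    match_scalars <;> ring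
  -- the derivation vanishes
  have hD : ∀ Y U W₁ W₂ : V,
      (⟪Y, Rt U W₁ W₂⟫_ℝ • ξ - ⟪ξ, Rt U W₁ W₂⟫_ℝ • Y)
        - Rt (⟪Y, U⟫_ℝ • ξ - ⟪ξ, U⟫_ℝ • Y) W₁ W₂
        - Rt U (⟪Y, W₁⟫_ℝ • ξ - ⟪ξ, W₁⟫_ℝ • Y) W₂
        - Rt U W₁ (⟪Y, W₂⟫_ℝ • ξ - ⟪ξ, W₂⟫_ℝ • Y) = 0 := by
    intro Y U W₁ W₂
    have h := hps Y U W₁ W₂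
    rw [hA Y (Rt U W₁ W₂), hA Y U, hA Y W₁, hA Y W₂, hS1, hS2, hS3] at h
    have h2 : ((-2 : ℝ) - L) • ((⟪Y, Rt U W₁ W₂⟫_ℝ • ξ - ⟪ξ, Rt U W₁ W₂⟫_ℝ • Y)
        - Rt (⟪Y, U⟫_ℝ • ξ - ⟪ξ, U⟫_ℝ • Y) W₁ W₂
        - Rt U (⟪Y, W₁⟫_ℝ • ξ - ⟪ξ, W₁⟫_ℝ • Y) W₂
        - Rt U W₁ (⟪Y, W₂⟫_ℝ • ξ - ⟪ξ, W₂⟫_ℝ • Y)) = 0 := by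
      rw [sub_smul]
      rw [smul_sub, smul_sub, smul_sub] at h
      linear_combination (norm := module) h
    have hc : ((-2 : ℝ) - L) ≠ 0 := by
      intro h0
      apply hL
      linarith [sub_eq_zero.mp h0]
    exact (smul_eq_zero.mp h2).resolve_left hc
  -- constant curvature -2
  have hC : ∀ Y U W₁ W₂ : V, ⟪Y, Rt U W₁ W₂⟫_ℝ
      = -2 * ⟪Y, U⟫_ℝ * ⟪W₁, W₂⟫_ℝ + 2 * ⟪Y, W₁⟫_ℝ * ⟪U, W₂⟫_ℝ := by
    intro Y U W₁ W₂
    have h := congrArg (fun v => ⟪v, ξ⟫_ℝ) (hD Y U W₁ W₂)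
    simp only [inner_sub_left, inner_smul_left, RCLike.inner_apply, conj_trivial,
      inner_zero_left, hB, hξ] at h
    simp only [inner_sub_left, inner_sub_right, inner_smul_left, inner_smul_right,
      RCLike.inner_apply, conj_trivial, hξ] at h
    have hcm : ⟪ξ, Rt U W₁ W₂⟫_ℝ = ⟪Rt U W₁ W₂, ξ⟫_ℝ := real_inner_comm _ _
    rw [hcm, hB] at h
    rw [real_inner_comm W₂ ξ, real_inner_comm U ξ, real_inner_comm W₁ ξ,
      real_inner_comm Y U, real_inner_comm Y W₁] at h
    linear_combination h
  -- final trace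
  intro Y U
  have hsum : ∀ i, ⟪Rt (b i) Y U, b i⟫_ℝ
      = -2 * ⟪b i, b i⟫_ℝ * ⟪Y, U⟫_ℝ + 2 * ⟪b i, Y⟫_ℝ * ⟪b i, U⟫_ℝ := by
    intro i
    rw [real_inner_comm, hC]
  have hbi : ∀ i, ⟪b i, b i⟫_ℝ = 1 := fun i => by
    have := hb.1 i
    rw [@real_inner_self_eq_norm_sq, this]; norm_num
  have : FiniteDimensional ℝ V := Module.Finite.of_basis b
  have ob := b.toOrthonormalBasis hb
  have hob : ∀ i, (b.toOrthonormalBasis hb) i = b i := fun i => by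
    rw [Module.Basis.coe_toOrthonormalBasis]
  have hpar : (∑ i, ⟪Y, b i⟫_ℝ * ⟪b i, U⟫_ℝ) = ⟪Y, U⟫_ℝ := by
    have := (b.toOrthonormalBasis hb).sum_inner_mul_inner Y U
    simpa [hob] using this
  calc (∑ i, ⟪Rt (b i) Y U, b i⟫_ℝ)
      = ∑ i, (-2 * ⟪b i, b i⟫_ℝ * ⟪Y, U⟫_ℝ + 2 * ⟪b i, Y⟫_ℝ * ⟪b i, U⟫_ℝ) := by
        exact Finset.sum_congr rfl (fun i _ => hsum i)
    _ = ∑ i, (-2 * ⟪Y, U⟫_ℝ + 2 * ⟪Y, b i⟫_ℝ * ⟪b i, U⟫_ℝ) := by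
        refine Finset.sum_congr rfl (fun i _ => ?_)
        rw [hbi i, real_inner_comm (b i) Y]; ring
    _ = -2 * ((n : ℝ) - 1) * ⟪Y, U⟫_ℝ := by
        rw [Finset.sum_add_distrib, Finset.sum_const]
        have h2 : (∑ x, 2 * ⟪Y, b x⟫_ℝ * ⟪b x, U⟫_ℝ) = 2 * ⟪Y, U⟫_ℝ := by
          rw [← hpar, Finset.mul_sum]
          exact Finset.sum_congr rfl fun i _ => by ring
        rw [h2]
        simp only [Finset.card_univ, Fintype.card_fin, nsmul_eq_mul]
        ring
end

section
/- If an n-dimensional para-Sasakian manifold with quarter-symmetric metric connection is projectively flat with respect to that connection, i.e. g(R̃(X,Y)Z, W) = (1/(n−1))·[S̃(Y,Z)g(X,W) − S̃(X,Z)g(Y,W)] for all X,Y,Z,W, then S̃(X,Z) = −2(n−1)g(X,Z) for all X, Z (the manifold is Einstein with respect to the quarter-symmetric connection). -/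
open scoped InnerProductSpace

/-- a projectively flat para-Sasakian structure with
quarter-symmetric metric connection is Einstein with respect to that connection:
S̃(X,Z) = −2(n−1)g(X,Z). -/
theorem stmt_12 {V : Type*} [NormedAddCommGroup V] [InnerProductSpace ℝ V]
    [FiniteDimensional ℝ V] (n : ℕ) (hn : Module.finrank ℝ V = n) (hn2 : 2 ≤ n)
    (ξ : V) (hξ : ⟪ξ, ξ⟫_ℝ = 1)
    (St : V →ₗ[ℝ] V →ₗ[ℝ] ℝ)
    (hStsymm : ∀ X Y, St X Y = St Y X)
    (hStξ : ∀ X, St X ξ = -2 * ((n : ℝ) - 1) * ⟪X, ξ⟫_ℝ)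
    (Rt : V →ₗ[ℝ] V →ₗ[ℝ] V →ₗ[ℝ] V)
    (hRtξ' : ∀ X Y, Rt ξ X Y = (2 : ℝ) • (⟪Y, ξ⟫_ℝ • X - ⟪X, Y⟫_ℝ • ξ))
    (hflat : ∀ X Y Z W, ⟪Rt X Y Z, W⟫_ℝ
      = (1 / ((n : ℝ) - 1)) * (St Y Z * ⟪X, W⟫_ℝ - St X Z * ⟪Y, W⟫_ℝ)) :
    ∀ X Z, St X Z = -2 * ((n : ℝ) - 1) * ⟪X, Z⟫_ℝ := by
  intro X Z
  have hne : (n : ℝ) - 1 ≠ 0 := by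
    have : (2 : ℝ) ≤ n := by exact_mod_cast hn2
    linarith
  have h := hflat ξ X Z ξ
  rw [hRtξ' X Z] at h
  have hSξZ : St ξ Z = -2 * ((n : ℝ) - 1) * ⟪Z, ξ⟫_ℝ := by
    rw [hStsymm, hStξ]
  simp only [inner_smul_left, inner_sub_left, RCLike.ofReal_real_eq_id, id_eq,
    map_ofNat, hξ, hSξZ, conj_trivial] at h
  have hsym : ⟪Z, ξ⟫_ℝ = ⟪ξ, Z⟫_ℝ := real_inner_comm _ _
  field_simp at h
  nlinarith [h, real_inner_comm X Z]
end
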